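/- Let m > 1 divide n and write n = n₁n₂ where every prime dividing n₁ divides n/m and gcd(n₂, n/m) = 1. Then the number of distinct permutations of [1,n] arising as (n,m)-piecewise affine permutations equals (m-1)! · (n·n₂·φ(n₁)/m²)^m, where φ is Euler's totient function. -/

import Mathlib

/-- `psi k x` is the representative of `x` mod `k` in `[1, k]`. -/
def psi (k x : ℕ) : ℕ := if x % k = 0 then k else x % k

/-- `π` is an `(n,m)`-piecewise affine permutation of `[1,n]` with parameters
`(a, b, c)`: it permutes `[1,n]` (and is the identity elsewhere), the entries of
`a, b` lie in `[1,n]`, the entries of `c` form a permutation of `[1,m]`, and for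
`x ∈ [1,n]` with `Ψ_m(x) = c_i` one has `π(x) = Ψ_n(a_i x + b_i)` and
`Ψ_m(π(x)) = c_{i+1}`, indices cyclic modulo `m`. -/
def IsPAP (n m : ℕ) [NeZero m] (a b c : Fin m → ℕ) (π : ℕ → ℕ) : Prop :=
  Set.BijOn π (Set.Icc 1 n) (Set.Icc 1 n) ∧
  (∀ x : ℕ, x ∉ Set.Icc 1 n → π x = x) ∧
  (∀ i, a i ∈ Set.Icc 1 n) ∧ (∀ i, b i ∈ Set.Icc 1 n) ∧
  (∀ i, c i ∈ Set.Icc 1 m) ∧ Function.Injective c ∧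
  ∀ x ∈ Set.Icc 1 n, ∀ i, psi m x = c i →
    π x = psi n (a i * x + b i) ∧ psi m (π x) = c (i + 1)

set_option linter.unusedSectionVars false
set_option maxHeartbeats 1000000

/-! ### Basic lemmas about `psi` -/

theorem psi_mem {k : ℕ} (hk : 0 < k) (x : ℕ) : psi k x ∈ Set.Icc 1 k := by
  unfold psi
  split
  · exact ⟨hk, le_refl k⟩
  · exact ⟨Nat.one_le_iff_ne_zero.2 ‹_›, (Nat.mod_lt x hk).le⟩

theorem psi_mod {k : ℕ} (x : ℕ) : psi k x % k = x % k := by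
  unfold psi
  split
  · simp [*]
  · exact Nat.mod_mod_of_dvd x (dvd_refl k)

theorem psi_eq_self {k x : ℕ} (hx : x ∈ Set.Icc 1 k) : psi k x = x := by
  obtain ⟨h1, h2⟩ := hx
  unfold psi
  rcases lt_or_eq_of_le h2 with h | h
  · rw [if_neg, Nat.mod_eq_of_lt h]
    rw [Nat.mod_eq_of_lt h]; omega
  · subst h; simp

theorem mem_eq_of_mod {k x y : ℕ} (hx : x ∈ Set.Icc 1 k) (hy : y ∈ Set.Icc 1 k)
    (h : x % k = y % k) : x = y := by
  obtain ⟨hx1, hx2⟩ := hx; obtain ⟨hy1, hy2⟩ := hy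
  rcases lt_or_eq_of_le hx2 with h' | h' <;> rcases lt_or_eq_of_le hy2 with h'' | h''
  · rwa [Nat.mod_eq_of_lt h', Nat.mod_eq_of_lt h''] at h
  · subst h''; rw [Nat.mod_eq_of_lt h', Nat.mod_self] at h; omega
  · subst h'; rw [Nat.mod_self, Nat.mod_eq_of_lt h''] at h; omega
  · omega

theorem psi_eq_psi_iff {k x y : ℕ} : psi k x = psi k y ↔ x % k = y % k := by
  constructor
  · intro h
    rw [← psi_mod (k := k) x, ← psi_mod (k := k) y, h]
  · intro h; unfold psi; rw [h]

theorem psi_mod_of_dvd {m n x : ℕ} (h : m ∣ n) : psi n x % m = x % m := by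
  conv_rhs => rw [← Nat.mod_mod_of_dvd x h, ← psi_mod (k := n) x, Nat.mod_mod_of_dvd _ h]

theorem psi_psi_of_dvd {m n x : ℕ} (h : m ∣ n) : psi m (psi n x) = psi m x := by
  rw [psi_eq_psi_iff]; exact psi_mod_of_dvd h

/-! ### The residue classes of `[1,n]` modulo `m` -/

theorem class_mem {n m k r t : ℕ} (hn : n = m * k) (hr : r ∈ Set.Icc 1 m) (ht : t < k) :
    r + t * m ∈ Set.Icc 1 n := by
  obtain ⟨h1, h2⟩ := hr
  constructor
  · omega
  · subst hn
    calc r + t * m ≤ m + (k-1) * m := by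
          have : t ≤ k - 1 := by omega
          exact Nat.add_le_add h2 (Nat.mul_le_mul_right m this)
      _ = m * k := by
          cases k with
          | zero => omega
          | succ k' => simp [Nat.succ_sub_one]; ring

theorem class_psi {m r t : ℕ} (hr : r ∈ Set.Icc 1 m) : psi m (r + t * m) = r := by
  rw [show psi m (r + t*m) = psi m r from psi_eq_psi_iff.2 (by simp [Nat.add_mul_mod_self_right]),
    psi_eq_self hr]

theorem class_decomp {n m k x : ℕ} (hn : n = m * k) (hm : 0 < m) (hx : x ∈ Set.Icc 1 n) :
    ∃ t < k, x = psi m x + t * m := by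
  obtain ⟨h1, h2⟩ := hx
  have hr := psi_mem hm x
  have hmod := psi_mod (k := m) x
  have hle : psi m x ≤ x := by
    obtain ⟨hr1, hr2⟩ := hr
    rcases Nat.lt_or_ge x m with h | h
    · have : x % m = x := Nat.mod_eq_of_lt h
      unfold psi
      split
      · omega
      · omega
    · omega
  have hdvd : m ∣ x - psi m x := (Nat.modEq_iff_dvd' hle).mp hmod
  have heq : (x - psi m x) / m * m = x - psi m x := Nat.div_mul_cancel hdvd
  have hr1 : 1 ≤ psi m x := hr.1
  refine ⟨(x - psi m x) / m, ?_, by omega⟩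
  by_contra hcon
  push_neg at hcon
  have h5 : k * m ≤ (x - psi m x)/m * m := Nat.mul_le_mul_right m hcon
  rw [heq] at h5
  have : m * k = k * m := Nat.mul_comm m k
  omega

/-! ### The normalized map `theta` built from parameters `(c, a, v)` -/

noncomputable def theta (n m : ℕ) [NeZero m] (c a v : Fin m → ℕ) : ℕ → ℕ :=
  fun x => if x ∈ Set.Icc 1 n then
    psi n (c (Function.invFun c (psi m x) + 1) + v (Function.invFun c (psi m x)) * m
      + a (Function.invFun c (psi m x)) * (x - c (Function.invFun c (psi m x))))
  else x

section TH

variable {n m k : ℕ} [NeZero m] {c a v : Fin m → ℕ}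
variable (hn : n = m * k) (hk : 0 < k)
variable (hc1 : ∀ i, c i ∈ Set.Icc 1 m) (hc2 : Function.Injective c)
variable (ha : ∀ i, a i ∈ Set.Icc 1 k) (hacop : ∀ i, Nat.Coprime (a i) k)
variable (hv : ∀ i, v i < k)

theorem hm_pos : 0 < m := Nat.pos_of_ne_zero (NeZero.ne m)

include hn hk hc1 hc2 in
theorem theta_apply (i : Fin m) (t : ℕ) (ht : t < k) :
    theta n m c a v (c i + t * m) = psi n (c (i+1) + v i * m + a i * (t * m)) := by
  have hx : c i + t * m ∈ Set.Icc 1 n := class_mem hn (hc1 i) ht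
  have hpsi : psi m (c i + t * m) = c i := class_psi (hc1 i)
  have hinv : Function.invFun c (c i) = i := Function.leftInverse_invFun hc2 i
  unfold theta
  rw [if_pos hx, hpsi, hinv, Nat.add_sub_cancel_left]

include hn hk hc1 hc2 hv in
theorem theta_apply_zero (i : Fin m) :
    theta n m c a v (c i) = c (i+1) + v i * m := by
  have := theta_apply (a := a) (v := v) hn hk hc1 hc2 i 0 hk
  simp only [Nat.zero_mul, Nat.add_zero, Nat.mul_zero] at this
  rw [this, psi_eq_self (class_mem hn (hc1 (i+1)) (hv i))]

include hn hk in
theorem theta_mem {x : ℕ} (hx : x ∈ Set.Icc 1 n) : theta n m c a v x ∈ Set.Icc 1 n := by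
  unfold theta
  rw [if_pos hx]
  have : 0 < n := hn ▸ Nat.mul_pos (Nat.pos_of_ne_zero (NeZero.ne m)) hk
  exact psi_mem this _

include hn hk hc1 hc2 in
theorem theta_psi (i : Fin m) (t : ℕ) (ht : t < k) :
    psi m (theta n m c a v (c i + t * m)) = c (i + 1) := by
  rw [theta_apply hn hk hc1 hc2 i t ht, psi_psi_of_dvd ⟨k, hn⟩]
  have h : (c (i+1) + v i * m + a i * (t * m)) % m = c (i+1) % m := by
    rw [show a i * (t * m) = a i * t * m from (mul_assoc _ _ _).symm,
      Nat.add_mul_mod_self_right, Nat.add_mul_mod_self_right]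
  rw [show psi m (c (i+1) + v i * m + a i * (t*m)) = psi m (c (i+1)) from psi_eq_psi_iff.2 h,
    psi_eq_self (hc1 (i+1))]

include hn hk hc1 hc2 in
theorem exists_rep {x : ℕ} (hx : x ∈ Set.Icc 1 n) : ∃ i : Fin m, ∃ t < k, x = c i + t * m := by
  obtain ⟨t, ht, hxe⟩ := class_decomp hn hm_pos hx
  have hsurj : ∀ y ∈ Set.Icc 1 m, ∃ i, c i = y := by
    intro y hy
    let f : Fin m → ↥(Set.Icc 1 m) := fun i => ⟨c i, hc1 i⟩
    have hfinj : Function.Injective f := fun p q h => hc2 (congrArg Subtype.val h)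
    have hbij : Function.Bijective f := by
      rw [Fintype.bijective_iff_injective_and_card]
      refine ⟨hfinj, ?_⟩
      rw [Fintype.card_fin, ← Set.toFinset_card, Set.toFinset_Icc, Nat.card_Icc]
      omega
    obtain ⟨i, hi⟩ := hbij.2 ⟨y, hy⟩
    exact ⟨i, congrArg Subtype.val hi⟩
  obtain ⟨i, hi⟩ := hsurj (psi m x) (psi_mem hm_pos x)
  exact ⟨i, t, ht, by rw [hxe, hi]⟩

include hn hk hc1 hc2 hacop in
theorem theta_injOn : Set.InjOn (theta n m c a v) (Set.Icc 1 n) := by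
  intro x hx y hy hxy
  obtain ⟨i, s, hs, rfl⟩ := exists_rep hn hk hc1 hc2 hx
  obtain ⟨j, t, ht, rfl⟩ := exists_rep hn hk hc1 hc2 hy
  have hcij : c (i + 1) = c (j + 1) := by
    rw [← theta_psi hn hk hc1 hc2 i s hs, ← theta_psi (a := a) (v := v) hn hk hc1 hc2 j t ht, hxy]
  have hij : i = j := by
    have := hc2 hcij
    exact add_right_cancel this
  subst hij
  rw [theta_apply hn hk hc1 hc2 i s hs, theta_apply hn hk hc1 hc2 i t ht] at hxy
  have hmod : (c (i+1) + v i * m + a i * (s * m)) % n = (c (i+1) + v i * m + a i * (t * m)) % n :=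
    psi_eq_psi_iff.1 hxy
  have h1 : a i * s * m ≡ a i * t * m [MOD k * m] := by
    have h0 : c (i+1) + v i * m + a i * s * m ≡ c (i+1) + v i * m + a i * t * m [MOD n] := by
      rw [Nat.ModEq, mul_assoc, mul_assoc]; exact hmod
    have := (Nat.ModEq.add_left_cancel' _ h0)
    rwa [hn, Nat.mul_comm m k] at this
  have h2 : a i * s ≡ a i * t [MOD k] :=
    Nat.ModEq.mul_right_cancel' (Nat.pos_of_ne_zero (NeZero.ne m)).ne' h1
  have h3 : s ≡ t [MOD k] := Nat.ModEq.cancel_left_of_coprime (hacop i).symm h2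
  have hst : s = t := by
    rw [Nat.ModEq, Nat.mod_eq_of_lt hs, Nat.mod_eq_of_lt ht] at h3
    exact h3
  rw [hst]

include hn hk hc1 hc2 hacop in
theorem theta_bijOn : Set.BijOn (theta n m c a v) (Set.Icc 1 n) (Set.Icc 1 n) := by
  have hfin : (Set.Icc 1 n).Finite := Set.finite_Icc _ _
  have hmap : Set.MapsTo (theta n m c a v) (Set.Icc 1 n) (Set.Icc 1 n) :=
    fun x hx => theta_mem hn hk hx
  exact (Set.Finite.injOn_iff_bijOn_of_mapsTo hfin hmap).1 (theta_injOn hn hk hc1 hc2 hacop)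

include hn hk hc1 hc2 ha hacop hv in
theorem theta_isPAP :
    IsPAP n m a (fun i => psi n (c (i+1) + v i * m + a i * (n - c i))) c (theta n m c a v) := by
  have hmp : 0 < m := Nat.pos_of_ne_zero (NeZero.ne m)
  have hnp : 0 < n := hn ▸ Nat.mul_pos hmp hk
  have hkn : k ≤ n := hn ▸ Nat.le_mul_of_pos_left k hmp
  refine ⟨theta_bijOn hn hk hc1 hc2 hacop, ?_, ?_, ?_, hc1, hc2, ?_⟩
  · intro x hx; unfold theta; rw [if_neg hx]
  · exact fun i => ⟨(ha i).1, le_trans (ha i).2 hkn⟩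
  · exact fun i => psi_mem hnp _
  · intro x hx i hpsi
    obtain ⟨t, ht, hxe⟩ := class_decomp hn hmp hx
    rw [hpsi] at hxe
    subst hxe
    constructor
    · rw [theta_apply hn hk hc1 hc2 i t ht]
      rw [psi_eq_psi_iff]
      have hcin : c i ≤ n := le_trans (hc1 i).2 (hn ▸ Nat.le_mul_of_pos_right m hk)
      have h1 : a i * (c i + t * m) + psi n (c (i+1) + v i * m + a i * (n - c i))
          ≡ a i * (c i + t * m) + (c (i+1) + v i * m + a i * (n - c i)) [MOD n] :=
        Nat.ModEq.add_left _ (psi_mod _)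
      have h2 : a i * (c i + t * m) + (c (i+1) + v i * m + a i * (n - c i))
          = c (i+1) + v i * m + (a i * (c i + t * m) + a i * (n - c i)) := by omega
      have h3 : a i * (c i + t * m) + a i * (n - c i) = a i * (t * m) + a i * n := by
        rw [← Nat.mul_add, ← Nat.mul_add]
        congr 1
        omega
      have h4 : c (i+1) + v i * m + (a i * (t * m) + a i * n)
          ≡ c (i+1) + v i * m + a i * (t * m) [MOD n] := by
        conv_rhs => rw [show c (i+1) + v i * m + a i * (t*m)
          = c (i+1) + v i * m + (a i * (t*m) + 0) from by omega]
        exact Nat.ModEq.add_left _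
          (Nat.ModEq.add_left _ (Nat.modEq_zero_iff_dvd.2 ⟨a i, mul_comm _ _⟩))
      calc (c (i+1) + v i * m + a i * (t * m)) % n
          = (c (i+1) + v i * m + (a i * (t * m) + a i * n)) % n := (h4).symm
        _ = (a i * (c i + t * m) + (c (i+1) + v i * m + a i * (n - c i))) % n := by rw [h2, h3]
        _ = (a i * (c i + t * m) + psi n (c (i+1) + v i * m + a i * (n - c i))) % n := (h1).symm
    · exact theta_psi hn hk hc1 hc2 i t ht

open Fin.NatCast in
include hn hk in
theorem theta_param_inj {c a v c' a' v' : Fin m → ℕ}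
    (hc1 : ∀ i, c i ∈ Set.Icc 1 m) (hc2 : Function.Injective c) (hc0 : c 0 = 1)
    (ha : ∀ i, a i ∈ Set.Icc 1 k) (hv : ∀ i, v i < k)
    (hc1' : ∀ i, c' i ∈ Set.Icc 1 m) (hc2' : Function.Injective c') (hc0' : c' 0 = 1)
    (ha' : ∀ i, a' i ∈ Set.Icc 1 k) (hv' : ∀ i, v' i < k)
    (h : theta n m c a v = theta n m c' a' v') :
    c = c' ∧ a = a' ∧ v = v' := by
  have hcc : c = c' := by
    have key : ∀ j : ℕ, c (j : Fin m) = c' (j : Fin m) := by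
      intro j
      induction j with
      | zero => rw [Nat.cast_zero, hc0, hc0']
      | succ j ih =>
        have e1 : ((j + 1 : ℕ) : Fin m) = (j : Fin m) + 1 := by push_cast; ring
        rw [e1]
        have t1 := theta_psi (a := a) (v := v) hn hk hc1 hc2 (j : Fin m) 0 hk
        have t2 := theta_psi (a := a') (v := v') hn hk hc1' hc2' (j : Fin m) 0 hk
        simp only [Nat.zero_mul, Nat.add_zero] at t1 t2
        rw [← t1, ← t2, h, ih]
    funext i
    have := key i.val
    rwa [Fin.cast_val_eq_self] at this
  subst hcc
  have hvv : v = v' := by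
    funext i
    have t1 := theta_apply_zero (a := a) hn hk hc1 hc2 hv i
    have t2 := theta_apply_zero (a := a') hn hk hc1 hc2 hv' i
    rw [h] at t1
    rw [t2] at t1
    have hmp : 0 < m := Nat.pos_of_ne_zero (NeZero.ne m)
    have : v i * m = v' i * m := by omega
    exact Nat.eq_of_mul_eq_mul_right hmp this
  subst hvv
  refine ⟨rfl, ?_, rfl⟩
  funext i
  rcases Nat.eq_or_lt_of_le hk with hk1 | hk2
  · have h1 := ha i; have h2 := ha' i
    rw [← hk1] at h1 h2
    have := h1.1; have := h1.2; have := h2.1; have := h2.2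
    omega
  · have t1 := theta_apply (a := a) (v := v) hn hk hc1 hc2 i 1 hk2
    have t2 := theta_apply (a := a') (v := v) hn hk hc1 hc2 i 1 hk2
    rw [h, t2] at t1
    have hmod := psi_eq_psi_iff.1 t1.symm
    have h0 : c (i+1) + v i * m + a i * (1 * m) ≡ c (i+1) + v i * m + a' i * (1 * m) [MOD n] := hmod
    have h1 := Nat.ModEq.add_left_cancel' _ h0
    have h2 : a i * m ≡ a' i * m [MOD k * m] := by
      have : n = k * m := by rw [hn, Nat.mul_comm]
      rw [← this]
      simpa [Nat.one_mul] using h1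
    have h3 : a i ≡ a' i [MOD k] :=
      Nat.ModEq.mul_right_cancel' (Nat.pos_of_ne_zero (NeZero.ne m)).ne' h2
    exact mem_eq_of_mod (ha i) (ha' i) h3

end TH

theorem c_surj {m : ℕ} [NeZero m] {c : Fin m → ℕ} (hc1 : ∀ i, c i ∈ Set.Icc 1 m)
    (hc2 : Function.Injective c) : ∀ y ∈ Set.Icc 1 m, ∃ i, c i = y := by
  intro y hy
  let f : Fin m → ↥(Set.Icc 1 m) := fun i => ⟨c i, hc1 i⟩
  have hfinj : Function.Injective f := fun p q h => hc2 (congrArg Subtype.val h)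
  have hbij : Function.Bijective f := by
    rw [Fintype.bijective_iff_injective_and_card]
    refine ⟨hfinj, ?_⟩
    rw [Fintype.card_fin, ← Set.toFinset_card, Set.toFinset_Icc, Nat.card_Icc]
    omega
  obtain ⟨i, hi⟩ := hbij.2 ⟨y, hy⟩
  exact ⟨i, congrArg Subtype.val hi⟩

theorem theta_surj {n m k : ℕ} [NeZero m] {π : ℕ → ℕ} {a b c : Fin m → ℕ}
    (hn : n = m * k) (hk : 0 < k) (hP : IsPAP n m a b c π) :
    ∃ c' a'' v : Fin m → ℕ, (∀ i, c' i ∈ Set.Icc 1 m) ∧ Function.Injective c' ∧ c' 0 = 1 ∧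
      (∀ i, a'' i ∈ Set.Icc 1 k) ∧ (∀ i, Nat.Coprime (a'' i) k) ∧ (∀ i, v i < k) ∧
      theta n m c' a'' v = π := by
  obtain ⟨hbij, hid, haI, hbI, hcI, hcinj, hmain⟩ := hP
  have hmp : 0 < m := Nat.pos_of_ne_zero (NeZero.ne m)
  have hnp : 0 < n := hn ▸ Nat.mul_pos hmp hk
  have hmn : m ≤ n := hn ▸ Nat.le_mul_of_pos_right m hk
  have hmdvd : m ∣ n := ⟨k, hn⟩
  obtain ⟨j, hj⟩ := c_surj hcI hcinj 1 ⟨le_refl 1, hmp⟩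
  set c' : Fin m → ℕ := fun i => c (i + j) with hc'def
  set a1 : Fin m → ℕ := fun i => a (i + j) with ha1def
  set b1 : Fin m → ℕ := fun i => b (i + j) with hb1def
  have hc1' : ∀ i, c' i ∈ Set.Icc 1 m := fun i => hcI _
  have hc2' : Function.Injective c' := fun p q h => by
    have := hcinj h
    exact add_right_cancel this
  have hc0' : c' 0 = 1 := by simp only [hc'def, zero_add, hj]
  have hmain' : ∀ x ∈ Set.Icc 1 n, ∀ i : Fin m, psi m x = c' i →
      π x = psi n (a1 i * x + b1 i) ∧ psi m (π x) = c' (i + 1) := by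
    intro x hx i hpsi
    have := hmain x hx (i + j) hpsi
    refine ⟨this.1, ?_⟩
    rw [this.2]
    show c (i + j + 1) = c (i + 1 + j)
    rw [add_right_comm]
  have hc'n : ∀ i : Fin m, c' i ∈ Set.Icc 1 n := fun i => ⟨(hc1' i).1, le_trans (hc1' i).2 hmn⟩
  have hpsic' : ∀ i : Fin m, psi m (c' i) = c' i := fun i => psi_eq_self (hc1' i)
  have hw : ∀ i : Fin m, π (c' i) = psi n (a1 i * c' i + b1 i) ∧ psi m (π (c' i)) = c' (i+1) :=
    fun i => hmain' (c' i) (hc'n i) i (hpsic' i)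
  set v : Fin m → ℕ := fun i => (π (c' i) - c' (i + 1)) / m with hvdef
  have hvspec : ∀ i : Fin m, v i < k ∧ c' (i+1) + v i * m = π (c' i) := by
    intro i
    have hwmem : π (c' i) ∈ Set.Icc 1 n := hbij.mapsTo (hc'n i)
    obtain ⟨t, ht, hteq⟩ := class_decomp hn hmp hwmem
    rw [(hw i).2] at hteq
    have hv_eq : v i = t := by
      rw [hvdef]
      simp only [hteq, Nat.add_sub_cancel_left, Nat.mul_div_cancel _ hmp]
    rw [hv_eq]
    exact ⟨ht, hteq.symm⟩
  have hvlt : ∀ i, v i < k := fun i => (hvspec i).1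
  set a2 : Fin m → ℕ := fun i => psi k (a1 i) with ha2def
  have ha2I : ∀ i, a2 i ∈ Set.Icc 1 k := fun i => psi_mem hk _
  have ha2mod : ∀ i, a2 i % k = a1 i % k := fun i => psi_mod _
  have hacop : ∀ i, Nat.Coprime (a2 i) k := by
    intro i
    by_contra hg
    set g := Nat.gcd (a2 i) k with hgdef
    have hgdvdk : g ∣ k := Nat.gcd_dvd_right _ _
    have hgdvda : g ∣ a2 i := Nat.gcd_dvd_left _ _
    have hgpos : 0 < g := Nat.gcd_pos_of_pos_right _ hk
    have hg1 : g ≠ 1 := fun h => hg h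
    have hg2 : 2 ≤ g := by omega
    set s := k / g with hsdef
    have hspos : 0 < s := Nat.div_pos (Nat.le_of_dvd hk hgdvdk) hgpos
    have hslt : s < k := Nat.div_lt_self hk hg2
    have hks : k ∣ a2 i * s := by
      obtain ⟨u, hu⟩ := hgdvda
      refine ⟨u, ?_⟩
      rw [hu, hsdef]
      calc g * u * (k / g) = g * (k / g) * u := by ring
        _ = k * u := by rw [Nat.mul_div_cancel' hgdvdk]
    have hka1s : k ∣ a1 i * s := by
      have hmodeq : a2 i ≡ a1 i [MOD k] := ha2mod i
      have h1 : a1 i * s ≡ a2 i * s [MOD k] := Nat.ModEq.mul_right s hmodeq.symm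
      have h2 : a2 i * s ≡ 0 [MOD k] := (Nat.modEq_zero_iff_dvd).2 hks
      exact (Nat.modEq_zero_iff_dvd).1 (h1.trans h2)
    have hymem : c' i + s * m ∈ Set.Icc 1 n := class_mem hn (hc1' i) hslt
    have hpsiy : psi m (c' i + s * m) = c' i := class_psi (hc1' i)
    have hπx := (hmain' (c' i) (hc'n i) i (hpsic' i)).1
    have hπy := (hmain' (c' i + s * m) hymem i hpsiy).1
    have heq : π (c' i) = π (c' i + s * m) := by
      rw [hπx, hπy, psi_eq_psi_iff]
      have : a1 i * (c' i + s * m) + b1 i = a1 i * c' i + b1 i + a1 i * s * m := by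
        rw [Nat.mul_add]; ring
      rw [this]
      have hdvdn : n ∣ a1 i * s * m := by
        obtain ⟨u, hu⟩ := hka1s
        exact ⟨u, by rw [hu, hn]; ring⟩
      have : a1 i * c' i + b1 i + a1 i * s * m ≡ a1 i * c' i + b1 i + 0 [MOD n] :=
        Nat.ModEq.add_left _ ((Nat.modEq_zero_iff_dvd).2 hdvdn)
      rw [Nat.add_zero] at this; exact this.symm
    have hne : c' i ≠ c' i + s * m := by
      have : 0 < s * m := Nat.mul_pos hspos hmp
      omega
    exact hne (hbij.injOn (hc'n i) hymem heq)
  refine ⟨c', a2, v, hc1', hc2', hc0', ha2I, hacop, hvlt, ?_⟩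
  funext x
  by_cases hx : x ∈ Set.Icc 1 n
  · obtain ⟨t, ht, hxe⟩ := class_decomp hn hmp hx
    obtain ⟨i, hi⟩ := c_surj hc1' hc2' (psi m x) (psi_mem hmp x)
    rw [← hi] at hxe
    have hθ : theta n m c' a2 v x = psi n (c' (i+1) + v i * m + a2 i * (t * m)) := by
      rw [hxe]; exact theta_apply hn hk hc1' hc2' i t ht
    have hπx := (hmain' x hx i hi.symm).1
    rw [hθ, hπx, psi_eq_psi_iff]
    have h1 : c' (i+1) + v i * m ≡ a1 i * c' i + b1 i [MOD n] := by
      rw [(hvspec i).2, (hw i).1]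
      exact psi_mod _
    have h2 : a2 i * (t * m) ≡ a1 i * (t * m) [MOD n] := by
      have hbase : a2 i * t ≡ a1 i * t [MOD k] :=
        Nat.ModEq.mul_right t ((ha2mod i) : a2 i ≡ a1 i [MOD k])
      have := Nat.ModEq.mul_right' (c := m) hbase
      have hkm : k * m = n := by rw [hn, Nat.mul_comm]
      rw [hkm] at this
      calc a2 i * (t * m) = a2 i * t * m := by ring
        _ ≡ a1 i * t * m [MOD n] := this
        _ = a1 i * (t * m) := by ring
    have h3 : c' (i+1) + v i * m + a2 i * (t * m)
        ≡ a1 i * c' i + b1 i + a1 i * (t * m) [MOD n] := Nat.ModEq.add h1 h2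
    have h4 : a1 i * x + b1 i = a1 i * c' i + b1 i + a1 i * (t * m) := by
      rw [hxe, Nat.mul_add]; ring
    rw [h4]
    exact h3
  · rw [hid x hx]
    unfold theta
    rw [if_neg hx]

/-! ### Counting the parameters -/

theorem card_C (m : ℕ) [NeZero m] :
    Nat.card {c : Fin m → ℕ // (∀ i, c i ∈ Set.Icc 1 m) ∧ Function.Injective c ∧ c 0 = 1}
      = Nat.factorial (m - 1) := by
  have hmp : 0 < m := Nat.pos_of_ne_zero (NeZero.ne m)
  have e1 : {c : Fin m → ℕ // (∀ i, c i ∈ Set.Icc 1 m) ∧ Function.Injective c ∧ c 0 = 1}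
      ≃ {f : Fin m → Fin m // Function.Injective f ∧ f 0 = 0} := by
    refine
      { toFun := fun c => ⟨fun i => ⟨c.1 i - 1, by
          have h1 := (c.2.1 i).1; have h2 := (c.2.1 i).2; omega⟩, ?_, ?_⟩
        invFun := fun f => ⟨fun i => (f.1 i : ℕ) + 1, ?_, ?_, ?_⟩
        left_inv := ?_
        right_inv := ?_ }
    · intro p q h
      apply c.2.2.1
      have := congrArg Fin.val h
      have h1 := (c.2.1 p).1; have h2 := (c.2.1 q).1
      simp only at this
      omega
    · apply Fin.ext
      simp [c.2.2.2, Fin.val_zero]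
    · intro i
      show (f.1 i : ℕ) + 1 ∈ Set.Icc 1 m
      have := (f.1 i).isLt
      exact Set.mem_Icc.mpr ⟨by omega, by omega⟩
    · intro p q h
      apply f.2.1
      apply Fin.ext
      simp only at h
      omega
    · show (f.1 0 : ℕ) + 1 = 1
      rw [f.2.2, Fin.val_zero]
    · intro c
      apply Subtype.ext
      funext i
      have h1 := (c.2.1 i).1
      simp only
      omega
    · intro f
      apply Subtype.ext
      funext i
      apply Fin.ext
      simp only
      omega
  have e2 : {f : Fin m → Fin m // Function.Injective f ∧ f 0 = 0}
      ≃ {g : {i : Fin m // i ≠ 0} → {x : Fin m // x ≠ 0} // Function.Injective g} := by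
    refine
      { toFun := fun f => ⟨fun i => ⟨f.1 i.1, fun h => i.2 (f.2.1 (h.trans f.2.2.symm))⟩, ?_⟩
        invFun := fun g => ⟨fun i => if h : i = 0 then 0 else (g.1 ⟨i, h⟩).1, ?_, ?_⟩
        left_inv := ?_
        right_inv := ?_ }
    · intro p q h
      exact Subtype.ext (f.2.1 (congrArg Subtype.val h))
    · intro p q h
      simp only at h
      by_cases hp : p = 0 <;> by_cases hq : q = 0
      · rw [hp, hq]
      · rw [dif_pos hp, dif_neg hq] at h
        exact absurd h.symm (g.1 ⟨q, hq⟩).2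
      · rw [dif_neg hp, dif_pos hq] at h
        exact absurd h (g.1 ⟨p, hp⟩).2
      · rw [dif_neg hp, dif_neg hq] at h
        have := g.2 (Subtype.ext h)
        exact congrArg Subtype.val this
    · exact dif_pos rfl
    · intro f
      apply Subtype.ext
      funext i
      simp only
      by_cases hi : i = 0
      · rw [dif_pos hi, hi, f.2.2]
      · rw [dif_neg hi]
    · intro g
      apply Subtype.ext
      funext i
      apply Subtype.ext
      simp only [dif_neg i.2]
  have e3 : {g : {i : Fin m // i ≠ 0} → {x : Fin m // x ≠ 0} // Function.Injective g}
      ≃ ({i : Fin m // i ≠ 0} ↪ {x : Fin m // x ≠ 0}) :=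
    Equiv.subtypeInjectiveEquivEmbedding _ _
  rw [Nat.card_congr ((e1.trans e2).trans e3), Nat.card_eq_fintype_card,
    Fintype.card_embedding_eq]
  have hcard : Fintype.card {i : Fin m // i ≠ 0} = m - 1 := by
    rw [Fintype.card_subtype_compl, Fintype.card_fin, Fintype.card_subtype_eq]
  rw [hcard, Nat.descFactorial_self]

theorem card_A (k : ℕ) (hk : 0 < k) :
    Nat.card {a : ℕ // a ∈ Set.Icc 1 k ∧ Nat.Coprime a k} = Nat.totient k := by
  have e : {a : ℕ // a ∈ Set.Icc 1 k ∧ Nat.Coprime a k}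
      ≃ {a : ℕ // a ∈ (Finset.Ico 1 (1 + k)).filter (fun x => Nat.Coprime k x)} := by
    apply Equiv.subtypeEquivRight
    intro a
    simp only [Set.mem_Icc, Finset.mem_filter, Finset.mem_Ico]
    rw [Nat.coprime_comm]
    omega
  rw [Nat.card_congr e, Nat.card_eq_finsetCard, Nat.filter_coprime_Ico_eq_totient]

theorem card_V (k : ℕ) : Nat.card {t : ℕ // t < k} = k := by
  rw [Nat.card_congr (Fin.equivSubtype (n := k)).symm, Nat.card_eq_fintype_card, Fintype.card_fin]

def Params (n m k : ℕ) [NeZero m] : Set ((Fin m → ℕ) × (Fin m → ℕ) × (Fin m → ℕ)) :=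
  {p | (∀ i, p.1 i ∈ Set.Icc 1 m) ∧ Function.Injective p.1 ∧ p.1 0 = 1 ∧
       (∀ i, p.2.1 i ∈ Set.Icc 1 k) ∧ (∀ i, Nat.Coprime (p.2.1 i) k) ∧ (∀ i, p.2.2 i < k)}

theorem card_Params (n m k : ℕ) [NeZero m] (hk : 0 < k) :
    Nat.card (Params n m k) = Nat.factorial (m - 1) * (Nat.totient k * k) ^ m := by
  have e : ↥(Params n m k) ≃
      {c : Fin m → ℕ // (∀ i, c i ∈ Set.Icc 1 m) ∧ Function.Injective c ∧ c 0 = 1} ×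
      (Fin m → {a : ℕ // a ∈ Set.Icc 1 k ∧ Nat.Coprime a k} × {t : ℕ // t < k}) := by
    refine
      { toFun := fun p => ⟨⟨p.1.1, p.2.1, p.2.2.1, p.2.2.2.1⟩,
          fun i => (⟨p.1.2.1 i, p.2.2.2.2.1 i, p.2.2.2.2.2.1 i⟩, ⟨p.1.2.2 i, p.2.2.2.2.2.2 i⟩)⟩
        invFun := fun q => ⟨⟨q.1.1, fun i => (q.2 i).1.1, fun i => (q.2 i).2.1⟩,
          q.1.2.1, q.1.2.2.1, q.1.2.2.2, fun i => ((q.2 i).1.2).1, fun i => ((q.2 i).1.2).2,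
          fun i => (q.2 i).2.2⟩
        left_inv := fun p => rfl
        right_inv := fun q => rfl }
  rw [Nat.card_congr e, Nat.card_prod, card_C, Nat.card_pi]
  congr 1
  rw [Finset.prod_const, Nat.card_prod, card_A k hk, card_V]
  simp

/-! ### Arithmetic identity -/

theorem totient_mul_same_primes : ∀ d : ℕ, 0 < d → ∀ k : ℕ, 0 < k →
    (∀ p : ℕ, p.Prime → p ∣ d → p ∣ k) → Nat.totient (k * d) = d * Nat.totient k := by
  intro d
  induction d using Nat.strong_induction_on with
  | _ d ih =>
    intro hd k hk hprimes
    rcases Nat.eq_or_lt_of_le hd with hd1 | hd2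
    · rw [← hd1, Nat.mul_one, Nat.one_mul]
    · obtain ⟨p, hp, hpd⟩ := Nat.exists_prime_and_dvd (by omega : d ≠ 1)
      have hpk : p ∣ k := hprimes p hp hpd
      obtain ⟨e, he⟩ := hpd
      have hppos : 0 < p := hp.pos
      have hepos : 0 < e := by
        rcases Nat.eq_zero_or_pos e with h | h
        · rw [h, Nat.mul_zero] at he; omega
        · exact h
      have helt : e < d := by
        have hp2 := hp.two_le
        calc e < p * e := by
              have : 1 * e < p * e := (Nat.mul_lt_mul_right hepos).2 (by omega)
              omega
          _ = d := he.symm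
      have hkd : k * d = p * (k * e) := by rw [he]; ring
      have hpke : p ∣ k * e := Dvd.dvd.mul_right hpk e
      rw [hkd, Nat.totient_mul_of_prime_of_dvd hp hpke,
        ih e helt hepos k hk (fun q hq hqe => hprimes q hq (hqe.trans ⟨p, by rw [he]; ring⟩))]
      rw [he]; ring

theorem pap_arith {n m k n₁ n₂ : ℕ} (hm : 0 < m) (hk : 0 < k) (hn : n = m * k)
    (hsplit : n = n₁ * n₂) (hrad : ∀ p : ℕ, p.Prime → p ∣ n₁ → p ∣ k)
    (hcop : Nat.Coprime n₂ k) :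
    (n * n₂ * Nat.totient n₁) / m ^ 2 = Nat.totient k * k := by
  have hnp : 0 < n := hn ▸ Nat.mul_pos hm hk
  have hn1p : 0 < n₁ := by
    rcases Nat.eq_zero_or_pos n₁ with h | h
    · rw [h, Nat.zero_mul] at hsplit; omega
    · exact h
  have hn2p : 0 < n₂ := by
    rcases Nat.eq_zero_or_pos n₂ with h | h
    · rw [h, Nat.mul_zero] at hsplit; omega
    · exact h
  have hkn : k ∣ n := ⟨m, by rw [hn]; ring⟩
  have hkn1 : k ∣ n₁ := (Nat.Coprime.dvd_of_dvd_mul_right (hcop.symm)) (hsplit ▸ hkn)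
  set d := n₁ / k with hddef
  have hd : n₁ = k * d := (Nat.mul_div_cancel' hkn1).symm
  have hdp : 0 < d := by
    rcases Nat.eq_zero_or_pos d with h | h
    · rw [h, Nat.mul_zero] at hd; omega
    · exact h
  have hmd : m = d * n₂ := by
    have h1 : k * m = k * (d * n₂) := by
      calc k * m = n := by rw [hn]; ring
        _ = n₁ * n₂ := hsplit
        _ = k * (d * n₂) := by rw [hd]; ring
    exact Nat.eq_of_mul_eq_mul_left hk h1
  have htot : Nat.totient n₁ = d * Nat.totient k := by
    rw [hd]
    exact totient_mul_same_primes d hdp k hk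
      (fun p hp hpd => hrad p hp (hpd.trans ⟨k, by rw [hd]; ring⟩))
  have key : n * n₂ * Nat.totient n₁ = m ^ 2 * (Nat.totient k * k) := by
    rw [htot, hn, hmd]; ring
  rw [key, Nat.mul_div_cancel_left _ (by positivity)]

/-- The number of distinct permutations of `[1,n]` arising as
`(n,m)`-piecewise affine permutations equals `(m-1)! · (n·n₂·φ(n₁)/m²)^m`. -/
theorem pap_number (n m n₁ n₂ : ℕ) [NeZero m] (hm : 1 < m) (hmn : m ∣ n)
    (hsplit : n = n₁ * n₂) (hrad : ∀ p : ℕ, p.Prime → p ∣ n₁ → p ∣ n / m)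
    (hcop : Nat.Coprime n₂ (n / m)) :
    Set.ncard {π : ℕ → ℕ | ∃ a b c : Fin m → ℕ, IsPAP n m a b c π}
      = Nat.factorial (m - 1) * ((n * n₂ * Nat.totient n₁) / m ^ 2) ^ m := by
  have hmp : 0 < m := by omega
  rcases Nat.eq_zero_or_pos n with hn0 | hnp
  · subst hn0
    have hempty : {π : ℕ → ℕ | ∃ a b c : Fin m → ℕ, IsPAP 0 m a b c π} = ∅ := by
      ext π
      simp only [Set.mem_setOf_eq, Set.mem_empty_iff_false, iff_false]
      rintro ⟨a, b, c, h⟩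
      have h3 := h.2.2.1 ⟨0, hmp⟩
      rw [Set.Icc_eq_empty (by omega : ¬ (1:ℕ) ≤ 0)] at h3
      exact h3
    rw [hempty, Set.ncard_empty]
    have h0 : (0 * n₂ * Nat.totient n₁) / m ^ 2 = 0 := by simp
    rw [h0, Nat.zero_pow hmp, Nat.mul_zero]
  · set k := n / m with hkdef
    have hn : n = m * k := (Nat.mul_div_cancel' hmn).symm
    have hk : 0 < k := by
      rcases Nat.eq_zero_or_pos k with h | h
      · rw [h, Nat.mul_zero] at hn; omega
      · exact h
    set S := {π : ℕ → ℕ | ∃ a b c : Fin m → ℕ, IsPAP n m a b c π} with hSdef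
    have hmem : ∀ p : ↥(Params n m k), (theta n m p.1.1 p.1.2.1 p.1.2.2) ∈ S := by
      rintro ⟨⟨c, a, v⟩, hc1, hc2, hc0, ha, hacop, hv⟩
      exact ⟨a, _, c, theta_isPAP hn hk hc1 hc2 ha hacop hv⟩
    have hcard : Nat.card (Params n m k) = Nat.card S := by
      refine Nat.card_eq_of_bijective (fun p => ⟨_, hmem p⟩) ⟨?_, ?_⟩
      · rintro ⟨⟨c, a, v⟩, hp⟩ ⟨⟨c', a', v'⟩, hp'⟩ h
        have hth : theta n m c a v = theta n m c' a' v' := congrArg Subtype.val h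
        obtain ⟨h1, h2, h3⟩ := theta_param_inj hn hk hp.1 hp.2.1 hp.2.2.1 hp.2.2.2.1
          hp.2.2.2.2.2 hp'.1 hp'.2.1 hp'.2.2.1 hp'.2.2.2.1 hp'.2.2.2.2.2 hth
        apply Subtype.ext
        simp only [Prod.mk.injEq]
        exact ⟨h1, h2, h3⟩
      · rintro ⟨π, a, b, c, hP⟩
        obtain ⟨c', a'', v, hc1', hc2', hc0', ha'', hacop'', hv, hthe⟩ := theta_surj hn hk hP
        exact ⟨⟨(c', a'', v), hc1', hc2', hc0', ha'', hacop'', hv⟩, Subtype.ext hthe⟩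
    rw [← Nat.card_coe_set_eq, ← hcard, card_Params n m k hk,
      pap_arith hmp hk hn hsplit hrad hcop]
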